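/- Let f = f1 = f2 : ℝ → ℝ be differentiable with −λ ≤ f′(s) ≤ λ for all s (subcharacteristic condition), λ > 0 = λ1 = λ2, and let Δx, Δt > 0 satisfy λ·Δt ≤ Δx/2. Let (u_j^n)_{j∈ℤ} be a sequence of finite total variation that is constant outside a finite set of indices, define the characteristic variables w_j^{n∓} = ½f(u_j^n) ∓ (λ/2)u_j^n and the MC-limited slopes s_j^{n∓} = minmod( 2(w_j^{n∓} − w_{j−1}^{n∓})/Δx, (w_{j+1}^{n∓} − w_{j−1}^{n∓})/(2Δx), 2(w_{j+1}^{n∓} − w_j^{n∓})/Δx ), with the node-adjacent slopes s_{−1}^{n−} and s_0^{n+} set to 0. Define u_j^{n+1} = u_j^n − (Δt/Δx)(F_{j+1/2}^n − F_{j−1/2}^n) with F_{j−1/2}^n = ½(f(u_{j−1}^n) + f(u_j^n)) − (λ/2)(u_j^n − u_{j−1}^n) − (Δx/2)(s_j^{n−} − s_{j−1}^{n+}). Then the scheme is total variation diminishing: Σ_{j∈ℤ} |u_{j+1}^{n+1} − u_j^{n+1}| ≤ Σ_{j∈ℤ} |u_{j+1}^n − u_j^n|. -/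

import Mathlib

open Set Function

/-- The minmod operator of three real numbers: their maximum if all are negative,
their minimum if all are positive, and 0 otherwise. -/
noncomputable def minmod (q1 q2 q3 : ℝ) : ℝ :=
  if q1 < 0 ∧ q2 < 0 ∧ q3 < 0 then max q1 (max q2 q3)
  else if 0 < q1 ∧ 0 < q2 ∧ 0 < q3 then min q1 (min q2 q3)
  else 0

lemma two_abs (a b : ℝ) (h : |a| ≤ |b|) : |a + b| + |a - b| = 2 * |b| := by
  have h1 : a ≤ |b| := le_trans (le_abs_self a) h
  have h2 : -|b| ≤ a := le_trans (neg_le_neg h) (neg_abs_le a)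
  rcases le_or_gt 0 b with hb | hb
  · rw [abs_of_nonneg hb] at h1 h2 ⊢
    rw [abs_of_nonneg (by linarith), abs_of_nonpos (by linarith)]
    ring
  · rw [abs_of_neg hb] at h1 h2 ⊢
    rw [abs_of_nonpos (by linarith), abs_of_nonneg (by linarith)]
    ring

lemma exists_factor {a x : ℝ} (h : (0 ≤ x ∧ x ≤ a) ∨ (a ≤ x ∧ x ≤ 0)) :
    ∃ θ : ℝ, θ ∈ Set.Icc (0:ℝ) 1 ∧ x = θ * a := by
  rcases eq_or_ne a 0 with rfl | ha
  · refine ⟨0, by norm_num, ?_⟩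
    rcases h with ⟨h1, h2⟩ | ⟨h1, h2⟩ <;> linarith
  · refine ⟨x / a, ⟨?_, ?_⟩, (div_mul_cancel₀ x ha).symm⟩
    · rcases h with ⟨h1, h2⟩ | ⟨h1, h2⟩
      · exact div_nonneg h1 (by linarith [lt_of_le_of_ne (le_trans h1 h2) (Ne.symm ha)])
      · exact div_nonneg_of_nonpos h2 (by linarith [lt_of_le_of_ne (le_trans h1 h2) ha])
    · rcases h with ⟨h1, h2⟩ | ⟨h1, h2⟩
      · have hap : 0 < a := lt_of_le_of_ne (le_trans h1 h2) (Ne.symm ha)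
        exact (div_le_one hap).mpr h2
      · have han : a < 0 := lt_of_le_of_ne (le_trans h1 h2) ha
        rw [div_le_one_iff]
        exact Or.inr (Or.inr ⟨han, h1⟩)

lemma minmod_rep (dx a b q2 : ℝ) (hdx : 0 < dx) :
    ∃ θ η : ℝ, θ ∈ Set.Icc (0:ℝ) 1 ∧ η ∈ Set.Icc (0:ℝ) 1 ∧
      dx / 2 * minmod (2 * a / dx) q2 (2 * b / dx) = θ * a ∧
      dx / 2 * minmod (2 * a / dx) q2 (2 * b / dx) = η * b := by
  have hdx2 : (0:ℝ) < dx / 2 := half_pos hdx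
  have ea : 2 * a / dx * (dx / 2) = a := by field_simp
  have eb : 2 * b / dx * (dx / 2) = b := by field_simp
  set s := minmod (2 * a / dx) q2 (2 * b / dx) with hsdef
  have key : (0 ≤ dx / 2 * s ∧ dx / 2 * s ≤ a ∧ dx / 2 * s ≤ b) ∨
      (a ≤ dx / 2 * s ∧ b ≤ dx / 2 * s ∧ dx / 2 * s ≤ 0) ∨ s = 0 := by
    rw [hsdef]
    unfold minmod
    split_ifs with h1 h2
    · right; left
      obtain ⟨ha', hq, hb'⟩ := h1
      refine ⟨?_, ?_, ?_⟩
      · have h := mul_le_mul_of_nonneg_right (le_max_left (2*a/dx) (max q2 (2*b/dx))) hdx2.le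
        rw [ea] at h; linarith
      · have h := mul_le_mul_of_nonneg_right
          (le_max_of_le_right (le_max_right q2 (2*b/dx)) :
            2*b/dx ≤ max (2*a/dx) (max q2 (2*b/dx))) hdx2.le
        rw [eb] at h; linarith
      · have hm : max (2*a/dx) (max q2 (2*b/dx)) < 0 := max_lt ha' (max_lt hq hb')
        exact le_of_lt (mul_neg_of_pos_of_neg hdx2 hm)
    · left
      obtain ⟨ha', hq, hb'⟩ := h2
      refine ⟨?_, ?_, ?_⟩
      · have hm : 0 < min (2*a/dx) (min q2 (2*b/dx)) := lt_min ha' (lt_min hq hb')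
        exact le_of_lt (mul_pos hdx2 hm)
      · have h := mul_le_mul_of_nonneg_right (min_le_left (2*a/dx) (min q2 (2*b/dx))) hdx2.le
        rw [ea] at h; linarith
      · have h := mul_le_mul_of_nonneg_right
          (min_le_of_right_le (min_le_right q2 (2*b/dx)) :
            min (2*a/dx) (min q2 (2*b/dx)) ≤ 2*b/dx) hdx2.le
        rw [eb] at h; linarith
    · right; right; rfl
  rcases key with ⟨h0, hA, hB⟩ | ⟨hA, hB, h0⟩ | h0
  · obtain ⟨θ, hθ, eθ⟩ := exists_factor (Or.inl ⟨h0, hA⟩)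
    obtain ⟨η, hη, eη⟩ := exists_factor (Or.inl ⟨h0, hB⟩)
    exact ⟨θ, η, hθ, hη, eθ, eη⟩
  · obtain ⟨θ, hθ, eθ⟩ := exists_factor (Or.inr ⟨hA, h0⟩)
    obtain ⟨η, hη, eη⟩ := exists_factor (Or.inr ⟨hB, h0⟩)
    exact ⟨θ, η, hθ, hη, eθ, eη⟩
  · exact ⟨0, 0, by norm_num, by norm_num, by rw [h0]; ring, by rw [h0]; ring⟩

lemma abs_comb (c1 c2 c3 c4 x1 x2 x3 x4 : ℝ) (h1 : 0 ≤ c1) (h2 : 0 ≤ c2)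
    (h3 : 0 ≤ c3) (h4 : 0 ≤ c4) :
    |c1*x1 + c2*x2 - c3*x3 - c4*x4| ≤ c1*|x1| + c2*|x2| + c3*|x3| + c4*|x4| := by
  have tri : ∀ A B : ℝ, |A - B| ≤ |A| + |B| := fun A B => by
    rw [sub_eq_add_neg]
    exact (abs_add_le _ _).trans (by rw [abs_neg])
  have t1 := tri (c1*x1 + c2*x2 - c3*x3) (c4*x4)
  have t2 := tri (c1*x1 + c2*x2) (c3*x3)
  have t3 := abs_add_le (c1*x1) (c2*x2)
  rw [abs_mul, abs_of_nonneg h1] at t3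
  rw [abs_mul, abs_of_nonneg h2] at t3
  rw [abs_mul, abs_of_nonneg h3] at t2
  rw [abs_mul, abs_of_nonneg h4] at t1
  linarith

/-- under the subcharacteristic condition and λΔt ≤ Δx/2 the second-order
central MUSCL scheme with the node-adjacent slopes s_{−1}⁻ and s_0⁺ set to zero is
total variation diminishing. -/
theorem central_muscl_tvd
    (f : ℝ → ℝ) (hf : Differentiable ℝ f)
    (lam dx dt : ℝ) (hlam : 0 < lam) (hdx : 0 < dx) (hdt : 0 < dt)
    (hsub : ∀ s : ℝ, -lam ≤ deriv f s ∧ deriv f s ≤ lam)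
    (hcfl : lam * dt ≤ dx / 2)
    (u : ℤ → ℝ)
    (hconst : ∃ c : ℝ, {j : ℤ | u j ≠ c}.Finite)
    (wm wp : ℤ → ℝ)
    (hwm : ∀ j : ℤ, wm j = f (u j) / 2 - (lam / 2) * u j)
    (hwp : ∀ j : ℤ, wp j = f (u j) / 2 + (lam / 2) * u j)
    (sm sp : ℤ → ℝ)
    (hsm : ∀ j : ℤ, sm j = if j = -1 then 0 else
      minmod (2 * (wm j - wm (j - 1)) / dx) ((wm (j + 1) - wm (j - 1)) / (2 * dx))
        (2 * (wm (j + 1) - wm j) / dx))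
    (hsp : ∀ j : ℤ, sp j = if j = 0 then 0 else
      minmod (2 * (wp j - wp (j - 1)) / dx) ((wp (j + 1) - wp (j - 1)) / (2 * dx))
        (2 * (wp (j + 1) - wp j) / dx))
    (F : ℤ → ℝ)
    (hF : ∀ j : ℤ, F j =
      (f (u (j - 1)) + f (u j)) / 2 - (lam / 2) * (u j - u (j - 1))
        - (dx / 2) * (sm j - sp (j - 1)))
    (unew : ℤ → ℝ)
    (hnew : ∀ j : ℤ, unew j = u j - (dt / dx) * (F (j + 1) - F j)) :
    ∑ᶠ j : ℤ, |unew (j + 1) - unew j| ≤ ∑ᶠ j : ℤ, |u (j + 1) - u j| := by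
  classical
  obtain ⟨c, hc⟩ := hconst
  -- Lipschitz bound
  have hlipw : LipschitzWith ⟨lam, hlam.le⟩ f := by
    apply lipschitzWith_of_nnnorm_deriv_le hf
    intro x
    change (‖deriv f x‖₊ : ℝ) ≤ lam
    rw [coe_nnnorm, Real.norm_eq_abs]
    exact abs_le.mpr ⟨(hsub x).1, (hsub x).2⟩
  have hlip : ∀ x y : ℝ, |f x - f y| ≤ lam * |x - y| := by
    intro x y
    have h := hlipw.dist_le_mul x y
    simp only [Real.dist_eq] at h; exact h
  -- CFL number bounds
  have hnu0 : 0 ≤ lam * dt / dx := by positivity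
  have hnu2 : lam * dt / dx ≤ 1 / 2 := by
    rw [div_le_iff₀ hdx]; linarith
  -- slope representations
  have hrep_p : ∀ j : ℤ, ∃ θ η : ℝ, θ ∈ Set.Icc (0:ℝ) 1 ∧ η ∈ Set.Icc (0:ℝ) 1 ∧
      dx / 2 * sp j = θ * (wp j - wp (j - 1)) ∧
      dx / 2 * sp j = η * (wp (j + 1) - wp j) := by
    intro j
    rw [hsp j]
    split_ifs with hj
    · exact ⟨0, 0, by norm_num, by norm_num, by ring, by ring⟩
    · exact minmod_rep dx (wp j - wp (j - 1)) (wp (j + 1) - wp j)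
        ((wp (j + 1) - wp (j - 1)) / (2 * dx)) hdx
  have hrep_m : ∀ j : ℤ, ∃ θ η : ℝ, θ ∈ Set.Icc (0:ℝ) 1 ∧ η ∈ Set.Icc (0:ℝ) 1 ∧
      dx / 2 * sm j = θ * (wm j - wm (j - 1)) ∧
      dx / 2 * sm j = η * (wm (j + 1) - wm j) := by
    intro j
    rw [hsm j]
    split_ifs with hj
    · exact ⟨0, 0, by norm_num, by norm_num, by ring, by ring⟩
    · exact minmod_rep dx (wm j - wm (j - 1)) (wm (j + 1) - wm j)
        ((wm (j + 1) - wm (j - 1)) / (2 * dx)) hdx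
  choose tp ep htp hep etp eep using hrep_p
  choose tm em htm hem etm eem using hrep_m
  -- the incremental coefficients
  set cp : ℤ → ℝ := fun j => lam * dt / dx * (1 + tp (j + 1) - ep j) with hcp
  set cm : ℤ → ℝ := fun j => lam * dt / dx * (1 - tm (j + 1) + em j) with hcm
  have hcpB : ∀ j : ℤ, 0 ≤ cp j ∧ cp j ≤ 1 := by
    intro j
    have h1 := (htp (j+1)).1; have h2 := (htp (j+1)).2
    have h3 := (hep j).1; have h4 := (hep j).2
    constructor
    · rw [hcp]; dsimp only; nlinarith
    · rw [hcp]; dsimp only; nlinarith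
  have hcmB : ∀ j : ℤ, 0 ≤ cm j ∧ cm j ≤ 1 := by
    intro j
    have h1 := (htm (j+1)).1; have h2 := (htm (j+1)).2
    have h3 := (hem j).1; have h4 := (hem j).2
    constructor
    · rw [hcm]; dsimp only; nlinarith
    · rw [hcm]; dsimp only; nlinarith
  -- flux in upwind form
  have hFW : ∀ j : ℤ, F (j + 1) =
      (wp j + dx / 2 * sp j) + (wm (j + 1) - dx / 2 * sm (j + 1)) := by
    intro j
    have h1 := hF (j + 1)
    have i3 : (j:ℤ) + 1 - 1 = j := by ring
    rw [i3] at h1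
    rw [h1, hwp j, hwm (j + 1)]
    ring
  -- key incremental identity
  have key : ∀ j : ℤ, lam * (unew (j + 1) - unew j) =
      (1 - cp j) * (wp (j + 1) - wp j) + cp (j - 1) * (wp j - wp (j - 1))
      - (1 - cm j) * (wm (j + 1) - wm j) - cm (j + 1) * (wm (j + 2) - wm (j + 1)) := by
    intro j
    have hup1 : wp (j+1) - wm (j+1) = lam * u (j+1) := by rw [hwp, hwm]; ring
    have hup0 : wp j - wm j = lam * u j := by rw [hwp, hwm]; ring
    have i1 : (j:ℤ) + 1 + 1 = j + 2 := by ring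
    have i2 : (j:ℤ) - 1 + 1 = j := by ring
    have i3 : (j:ℤ) + 1 - 1 = j := by ring
    have i4 : (j:ℤ) + 2 - 1 = j + 1 := by ring
    have f2 := hFW (j + 1); rw [i1] at f2
    have f1 := hFW j
    have f0 := hFW (j - 1); rw [i2] at f0
    have a1 := etp (j + 1); rw [i3] at a1
    have a2 := eep j
    have a3 := etp j
    have a4 := eep (j - 1); rw [i2] at a4
    have b1 := etm (j + 2); rw [i4] at b1
    have b2 := eem (j + 1); rw [i1] at b2
    have b3 := etm (j + 1); rw [i3] at b3
    have b4 := eem j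
    rw [hnew (j + 1), hnew j, i1, f2, f1, f0]
    simp only [hcp, hcm]
    rw [i2, i1]
    linear_combination hup0 - hup1 +
      (lam * dt / dx) * (a2 + a3 - a1 - a4 + b1 - b2 - b3 + b4)
  -- pointwise bound
  have habs : ∀ j : ℤ, lam * |unew (j + 1) - unew j| ≤
      (1 - cp j) * |wp (j + 1) - wp j| + cp (j - 1) * |wp j - wp (j - 1)|
      + (1 - cm j) * |wm (j + 1) - wm j| + cm (j + 1) * |wm (j + 2) - wm (j + 1)| := by
    intro j
    have e : lam * |unew (j + 1) - unew j| = |lam * (unew (j + 1) - unew j)| := by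
      rw [abs_mul, abs_of_pos hlam]
    rw [e, key j]
    exact abs_comb _ _ _ _ _ _ _ _ (by linarith [(hcpB j).2]) (hcpB (j-1)).1
      (by linarith [(hcmB j).2]) (hcmB (j+1)).1
  -- finiteness of supports
  have hinj1 : Function.Injective (fun j : ℤ => j + 1) := fun a b hab => by
    simpa using hab
  have hinj2 : Function.Injective (fun j : ℤ => j - 1) := fun a b hab => by
    simpa using hab
  have hDfin : {j : ℤ | u (j + 1) ≠ u j}.Finite := by
    apply Set.Finite.subset ((hc.preimage hinj1.injOn).union hc)
    intro j hj
    simp only [Set.mem_setOf_eq] at hj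
    simp only [Set.mem_union, Set.mem_preimage, Set.mem_setOf_eq]
    by_contra hcon
    push_neg at hcon
    exact hj (hcon.1.trans hcon.2.symm)
  have hEfin : ({j : ℤ | u (j + 1) ≠ u j} ∪
      ((fun j : ℤ => j - 1) ⁻¹' {j : ℤ | u (j + 1) ≠ u j}) ∪
      ((fun j : ℤ => j + 1) ⁻¹' {j : ℤ | u (j + 1) ≠ u j})).Finite :=
    (hDfin.union (hDfin.preimage hinj2.injOn)).union (hDfin.preimage hinj1.injOn)
  set T : Finset ℤ := hEfin.toFinset with hT
  have hnT : ∀ j : ℤ, j ∉ T → u (j + 1) = u j ∧ u j = u (j - 1) ∧ u (j + 2) = u (j + 1) := by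
    intro j hj
    rw [hT, Set.Finite.mem_toFinset] at hj
    simp only [Set.mem_union, Set.mem_preimage, Set.mem_setOf_eq, not_or] at hj
    obtain ⟨⟨h1, h2⟩, h3⟩ := hj
    rw [not_ne_iff] at h1 h2 h3
    rw [show (j:ℤ) - 1 + 1 = j from by ring] at h2
    rw [show (j:ℤ) + 1 + 1 = j + 2 from by ring] at h3
    exact ⟨h1, h2, h3⟩
  have hmemT : ∀ j : ℤ, u (j + 1) ≠ u j → j ∈ T := by
    intro j hj
    rw [hT, Set.Finite.mem_toFinset]
    exact Or.inl (Or.inl hj)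
  have hwp0 : ∀ i k : ℤ, u i = u k → wp i - wp k = 0 := by
    intro i k h; rw [hwp, hwp, h]; ring
  have hwm0 : ∀ i k : ℤ, u i = u k → wm i - wm k = 0 := by
    intro i k h; rw [hwm, hwm, h]; ring
  -- finsum-to-finset conversion
  have TX : ∀ v : ℤ → ℝ, (∀ j : ℤ, j ∉ T → v j = 0) → ∑ᶠ j : ℤ, v j = ∑ j ∈ T, v j := by
    intro v hv
    refine finsum_eq_finset_sum_of_support_subset v ?_
    intro j hj
    simp only [Function.mem_support] at hj
    simp only [Finset.coe_sort_coe, Finset.mem_coe]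
    by_contra h
    exact hj (hv j h)
  -- vanishing conditions
  have hv0 : ∀ j : ℤ, j ∉ T → |u (j + 1) - u j| = 0 := by
    intro j hj
    rw [(hnT j hj).1]
    simp
  have hvn : ∀ j : ℤ, j ∉ T → |unew (j + 1) - unew j| = 0 := by
    intro j hj
    obtain ⟨e1, e2, e3⟩ := hnT j hj
    have hz : lam * (unew (j + 1) - unew j) = 0 := by
      rw [key j, hwp0 _ _ e1, hwp0 _ _ e2, hwm0 _ _ e1, hwm0 _ _ e3]
      ring
    have : unew (j + 1) - unew j = 0 := by
      rcases mul_eq_zero.mp hz with h | h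
      · exact absurd h (ne_of_gt hlam)
      · exact h
    rw [this, abs_zero]
  have hB : ∀ j : ℤ, j ∉ T → cp (j - 1) * |wp j - wp (j - 1)| = 0 := by
    intro j hj
    rw [hwp0 _ _ (hnT j hj).2.1, abs_zero, mul_zero]
  have hB' : ∀ j : ℤ, j ∉ T → cp j * |wp (j + 1) - wp j| = 0 := by
    intro j hj
    rw [hwp0 _ _ (hnT j hj).1, abs_zero, mul_zero]
  have hD : ∀ j : ℤ, j ∉ T → cm (j + 1) * |wm (j + 2) - wm (j + 1)| = 0 := by
    intro j hj
    rw [hwm0 _ _ (hnT j hj).2.2, abs_zero, mul_zero]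
  have hD' : ∀ j : ℤ, j ∉ T → cm j * |wm (j + 1) - wm j| = 0 := by
    intro j hj
    rw [hwm0 _ _ (hnT j hj).1, abs_zero, mul_zero]
  -- shifted sums
  have SB : ∑ j ∈ T, cp (j - 1) * |wp j - wp (j - 1)| = ∑ j ∈ T, cp j * |wp (j + 1) - wp j| := by
    rw [← TX _ hB, ← TX _ hB']
    refine finsum_eq_of_bijective (fun j : ℤ => j - 1)
      ⟨fun a b hab => by simpa using hab, fun b => ⟨b + 1, by simp⟩⟩ ?_
    intro j
    rw [show (j:ℤ) - 1 + 1 = j from by ring]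
  have SD : ∑ j ∈ T, cm (j + 1) * |wm (j + 2) - wm (j + 1)| =
      ∑ j ∈ T, cm j * |wm (j + 1) - wm j| := by
    rw [← TX _ hD, ← TX _ hD']
    refine finsum_eq_of_bijective (fun j : ℤ => j + 1)
      ⟨fun a b hab => by simpa using hab, fun b => ⟨b - 1, by simp⟩⟩ ?_
    intro j
    rw [show (j:ℤ) + 1 + 1 = j + 2 from by ring]
  -- pointwise TV splitting
  have hsplit : ∀ j : ℤ, |wp (j + 1) - wp j| + |wm (j + 1) - wm j| = lam * |u (j + 1) - u j| := by
    intro j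
    have ea : wp (j + 1) - wp j =
        (f (u (j + 1)) - f (u j)) / 2 + lam / 2 * (u (j + 1) - u j) := by
      rw [hwp, hwp]; ring
    have eb : wm (j + 1) - wm j =
        (f (u (j + 1)) - f (u j)) / 2 - lam / 2 * (u (j + 1) - u j) := by
      rw [hwm, hwm]; ring
    have hab : |(f (u (j + 1)) - f (u j)) / 2| ≤ |lam / 2 * (u (j + 1) - u j)| := by
      have h := hlip (u (j + 1)) (u j)
      rw [abs_div, show |(2:ℝ)| = 2 from by norm_num, abs_mul,
        abs_of_nonneg (le_of_lt (half_pos hlam))]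
      linarith
    rw [ea, eb, two_abs _ _ hab, abs_mul, abs_of_nonneg (le_of_lt (half_pos hlam))]
    ring
  -- main chain
  have main : lam * (∑ᶠ j : ℤ, |unew (j + 1) - unew j|) ≤
      lam * (∑ᶠ j : ℤ, |u (j + 1) - u j|) := by
    calc lam * (∑ᶠ j : ℤ, |unew (j + 1) - unew j|)
        = ∑ j ∈ T, lam * |unew (j + 1) - unew j| := by
          rw [TX _ hvn, Finset.mul_sum]
      _ ≤ ∑ j ∈ T, ((1 - cp j) * |wp (j + 1) - wp j| + cp (j - 1) * |wp j - wp (j - 1)|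
            + (1 - cm j) * |wm (j + 1) - wm j| + cm (j + 1) * |wm (j + 2) - wm (j + 1)|) :=
          Finset.sum_le_sum (fun j _ => habs j)
      _ = ∑ j ∈ T, (1 - cp j) * |wp (j + 1) - wp j| + ∑ j ∈ T, cp (j - 1) * |wp j - wp (j - 1)|
            + ∑ j ∈ T, (1 - cm j) * |wm (j + 1) - wm j|
            + ∑ j ∈ T, cm (j + 1) * |wm (j + 2) - wm (j + 1)| := by
          rw [Finset.sum_add_distrib, Finset.sum_add_distrib, Finset.sum_add_distrib]
      _ = ∑ j ∈ T, (1 - cp j) * |wp (j + 1) - wp j| + ∑ j ∈ T, cp j * |wp (j + 1) - wp j|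
            + ∑ j ∈ T, (1 - cm j) * |wm (j + 1) - wm j|
            + ∑ j ∈ T, cm j * |wm (j + 1) - wm j| := by
          rw [SB, SD]
      _ = ∑ j ∈ T, (|wp (j + 1) - wp j| + |wm (j + 1) - wm j|) := by
          rw [← Finset.sum_add_distrib, ← Finset.sum_add_distrib, ← Finset.sum_add_distrib]
          exact Finset.sum_congr rfl (fun j _ => by ring)
      _ = ∑ j ∈ T, lam * |u (j + 1) - u j| :=
          Finset.sum_congr rfl (fun j _ => hsplit j)
      _ = lam * (∑ᶠ j : ℤ, |u (j + 1) - u j|) := by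
          rw [TX _ hv0, Finset.mul_sum]
  exact le_of_mul_le_mul_left main hlam
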